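/- If z is an element of the degree-2 part H² of S_n with z² = 0 in S_n, then the image of z under the reduction map S_n → S_n ⊗ ℤ/2 is either 0 or equal to the image of x_1. -/

import Mathlib

/-!
Context: for n ≥ 1, S_n := ℤ[x_1,…,x_n]/(x_1², x_j² − x_1 x_j : j = 2,…,n) is
the integral cohomology ring of the n-stage Bott manifold 𝓗_n.  The degree-2
part H² of S_n is the free abelian group with basis x_1,…,x_n, and an element
of H² is primitive if the gcd of its coordinates is 1.

STATEMENT 7: If z is an element of the degree-2 part H² of S_n with z² = 0
in S_n, then the image of z under the reduction map S_n → S_n ⊗ ℤ/2 is either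
0 or equal to the image of x_1.
-/

open MvPolynomial

noncomputable section

/-- The defining relations x_1², x_j² − x_1 x_j (j ≥ 2) of S_n. -/
def srel (n : ℕ) (j : Fin n) : MvPolynomial (Fin n) ℤ :=
  X j ^ 2 -
    (if j.val = 0 then 0
      else X (⟨0, Nat.lt_of_le_of_lt (Nat.zero_le _) j.isLt⟩ : Fin n)) * X j

/-- S_n = ℤ[x_1,…,x_n]/(x_1², x_j² − x_1 x_j : j = 2,…,n). -/
abbrev SRing (n : ℕ) : Type :=
  MvPolynomial (Fin n) ℤ ⧸ Ideal.span (Set.range (srel n))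

/-- The image x_i of X i in S_n. -/
def sx (n : ℕ) (i : Fin n) : SRing n :=
  Ideal.Quotient.mk _ (X i)

/-- The reduction map S_n → S_n ⊗ ℤ/2 = S_n/2S_n. -/
def mod2 (n : ℕ) : SRing n →+* SRing n ⧸ (Ideal.span ({2} : Set (SRing n))) :=
  Ideal.Quotient.mk _

/-! Auxiliary material: the test ring ℤ[δ,ε]/(δ²,ε²), realized as iterated dual numbers. -/

set_option synthInstance.maxHeartbeats 1000000
set_option maxHeartbeats 2000000

abbrev RR : Type := DualNumber (DualNumber ℤ)

def DD : RR := TrivSqZeroExt.inl DualNumber.eps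
def EE : RR := DualNumber.eps

lemma DD_sq : DD ^ 2 = 0 := by
  ext <;>
    simp [DD, pow_two, TrivSqZeroExt.fst_mul, TrivSqZeroExt.snd_mul]

lemma EE_sq : EE ^ 2 = 0 := by
  rw [pow_two]; exact DualNumber.eps_mul_eps

lemma DE_snd : (DD * EE).snd.snd = 1 := by
  rw [TrivSqZeroExt.snd_mul]
  simp only [DD, EE, DualNumber.eps, TrivSqZeroExt.fst_inl, TrivSqZeroExt.snd_inl,
    TrivSqZeroExt.fst_inr, TrivSqZeroExt.snd_inr]
  rw [smul_zero, add_zero, smul_eq_mul, mul_one, TrivSqZeroExt.snd_inr]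

lemma cast_mul_snd (k : ℤ) (x : RR) : ((k : RR) * x).snd.snd = k * x.snd.snd := by
  rw [← zsmul_eq_mul, TrivSqZeroExt.snd_smul, TrivSqZeroExt.snd_smul, smul_eq_mul]

theorem mod2_of_square_zero (n : ℕ) [NeZero n] (c : Fin n → ℤ)
    (z : SRing n) (hz : z = ∑ i, c i • sx n i) (hsq : z ^ 2 = 0) :
    mod2 n z = 0 ∨ mod2 n z = mod2 n (sx n 0) := by
  classical
  have hmk0 : ∀ i : Fin n,
      (⟨0, Nat.lt_of_le_of_lt (Nat.zero_le _) i.isLt⟩ : Fin n) = 0 := by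
    intro i
    exact Fin.ext (by simp)
  -- Step 1: every coordinate c j with j ≠ 0 is even.
  have key : ∀ j : Fin n, j ≠ 0 → (2 : ℤ) ∣ c j := by
    intro j hj
    set t : Fin n → RR :=
      fun i => if i = 0 then (2 : RR) * DD else if i = j then DD + EE else 0 with ht
    have hrel : ∀ i, MvPolynomial.aeval t (srel n i) = 0 := by
      intro i
      rw [srel, hmk0 i]
      by_cases hi0 : i.val = 0
      · have hi : i = 0 := Fin.ext (by simpa using hi0)
        subst hi
        simp only [hi0, if_pos, map_sub, map_pow, map_mul, aeval_X, zero_mul, map_zero, sub_zero]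
        have ht0 : t 0 = (2 : RR) * DD := by simp [ht]
        rw [ht0]
        linear_combination (4 : RR) * DD_sq
      · simp only [hi0, if_neg, map_sub, map_pow, map_mul, aeval_X, not_false_iff]
        have hine : i ≠ 0 := fun h => hi0 (by simp [h])
        by_cases hij : i = j
        · subst hij
          have hti : t i = DD + EE := by simp [ht, hine]
          have ht0 : t 0 = (2 : RR) * DD := by simp [ht]
          rw [hti, ht0]
          linear_combination EE_sq - DD_sq
        · have hti : t i = 0 := by simp [ht, hine, hij]
          rw [hti]
          ring
    have hle : Ideal.span (Set.range (srel n)) ≤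
        RingHom.ker (MvPolynomial.aeval t : MvPolynomial (Fin n) ℤ →ₐ[ℤ] RR).toRingHom := by
      rw [Ideal.span_le]
      rintro _ ⟨i, rfl⟩
      exact hrel i
    set F : SRing n →+* RR :=
      Ideal.Quotient.lift _ (MvPolynomial.aeval t : MvPolynomial (Fin n) ℤ →ₐ[ℤ] RR).toRingHom
        (fun a ha => hle ha) with hF
    have hFx : ∀ i : Fin n, F (sx n i) = t i := by
      intro i
      simp [hF, sx, Ideal.Quotient.lift_mk]
    have hFz : F z = ((c 0 : RR)) * ((2 : RR) * DD) + ((c j : RR)) * (DD + EE) := by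
      rw [hz, map_sum]
      have h1 : ∀ i : Fin n, F (c i • sx n i) = c i • t i := by
        intro i; rw [map_zsmul, hFx]
      simp only [h1]
      rw [← Finset.sum_subset (Finset.subset_univ ({0, j} : Finset (Fin n)))
        (by
          intro x _ hx
          simp only [Finset.mem_insert, Finset.mem_singleton, not_or] at hx
          simp [ht, hx.1, hx.2])]
      rw [Finset.sum_pair (Ne.symm hj)]
      have ht0 : t 0 = (2 : RR) * DD := by simp [ht]
      have htj : t j = DD + EE := by simp [ht, hj]
      rw [ht0, htj, zsmul_eq_mul, zsmul_eq_mul]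
    have hFz2 : F z ^ 2 = 0 := by rw [← map_pow, hsq, map_zero]
    have hexp : F z ^ 2 =
        ((2 * (c j * (2 * c 0 + c j)) : ℤ) : RR) * (DD * EE) := by
      rw [hFz]
      push_cast
      linear_combination ((2 * (c 0 : RR) + (c j : RR)) ^ 2) * DD_sq
        + ((c j : RR) ^ 2) * EE_sq
    have hint : 2 * (c j * (2 * c 0 + c j)) = 0 := by
      have hq := congrArg (fun x : RR => x.snd.snd) (hexp.symm.trans hFz2)
      simp only [cast_mul_snd, DE_snd, mul_one, TrivSqZeroExt.snd_zero] at hq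
      exact hq
    have hcc : c j * (2 * c 0 + c j) = 0 := by omega
    rcases mul_eq_zero.mp hcc with h | h
    · exact ⟨0, by omega⟩
    · exact ⟨-c 0, by omega⟩
  -- Step 2: reduce mod 2.
  have h2 : (2 : SRing n ⧸ Ideal.span ({2} : Set (SRing n))) = 0 := by
    rw [show (2 : SRing n ⧸ Ideal.span ({2} : Set (SRing n)))
        = Ideal.Quotient.mk _ (2 : SRing n) from (map_ofNat (Ideal.Quotient.mk (Ideal.span ({2} : Set (SRing n)))) 2).symm]
    exact Ideal.Quotient.eq_zero_iff_mem.mpr (Ideal.mem_span_singleton_self 2)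
  have hmz : mod2 n z = ((c 0 : ℤ) : SRing n ⧸ Ideal.span ({2} : Set (SRing n)))
      * mod2 n (sx n 0) := by
    rw [hz, map_sum]
    rw [Finset.sum_eq_single (0 : Fin n)]
    · rw [map_zsmul, zsmul_eq_mul (α := SRing n ⧸ Ideal.span ({2} : Set (SRing n)))]
    · intro i _ hi
      obtain ⟨d, hd⟩ := key i hi
      rw [map_zsmul, hd, zsmul_eq_mul (α := SRing n ⧸ Ideal.span ({2} : Set (SRing n)))]
      push_cast
      rw [h2]
      ring
    · intro h
      exact absurd (Finset.mem_univ 0) h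
  rcases Int.even_or_odd (c 0) with ⟨k, hk⟩ | ⟨k, hk⟩
  · left
    rw [hmz, hk]
    push_cast
    rw [← two_mul (k : SRing n ⧸ Ideal.span ({2} : Set (SRing n))), h2]
    ring
  · right
    rw [hmz, hk]
    push_cast
    rw [Int.cast_mul (α := SRing n ⧸ Ideal.span ({2} : Set (SRing n))), Int.cast_ofNat (R := SRing n ⧸ Ideal.span ({2} : Set (SRing n))), h2]
    ring

end
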